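/- Let Γ be a flag simplicial complex with gr_1(Γ) > 4 (so Γ has no induced 4-cycle in the graph-theoretic sense, obtained via homology). Suppose there are vertices u ≠ v, not adjacent, and s distinct common neighbors v_1, …, v_s of u and v with s > dim Γ + 1. Then some pair v_i, v_j (i ≠ j) is non-adjacent, and Γ[{u, v, v_i, v_j}] is a graph-theoretic 4-cycle with H̃_1(Γ[{u, v, v_i, v_j}]; k) ≠ 0, contradicting gr_1(Γ) > 4. Hence any two non-adjacent vertices of Γ have at most dim Γ + 1 common neighbors. -/

import Mathlib

open Finset

/-- An (abstract) simplicial complex on vertex type `V`: a collection of finite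
subsets of `V` (the faces) closed under taking subsets. -/
structure SC (V : Type*) where
  faces : Set (Finset V)
  down_closed : ∀ {F G : Finset V}, F ∈ faces → G ⊆ F → G ∈ faces

namespace SC

variable {V : Type*} [LinearOrder V]

/-- The vertex set of a simplicial complex. -/
def vertexSet (K : SC V) : Set V := {v | {v} ∈ K.faces}

/-- The induced subcomplex `K[W]` on a set `W` of vertices. -/
def restrict (K : SC V) (W : Set V) : SC V where
  faces := {F | F ∈ K.faces ∧ ↑F ⊆ W}
  down_closed := fun hF hGF =>
    ⟨K.down_closed hF.1 hGF, Set.Subset.trans (Finset.coe_subset.mpr hGF) hF.2⟩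

/-- The link `lk_K(F)` of a face `F`: all `G` disjoint from `F` with `F ∪ G ∈ K`. -/
def link (K : SC V) (F : Finset V) : SC V where
  faces := {G | Disjoint F G ∧ F ∪ G ∈ K.faces}
  down_closed := fun hG hHG =>
    ⟨hG.1.mono_right (Finset.le_iff_subset.mpr hHG),
      K.down_closed hG.2 (Finset.union_subset_union_right hHG)⟩

/-- A complex is flag if every set all of whose subsets of cardinality at most 2
are faces is itself a face (equivalently, all minimal non-faces have two vertices). -/
def Flag (K : SC V) : Prop :=
  ∀ F : Finset V, (∀ G ⊆ F, G.card ≤ 2 → G ∈ K.faces) → F ∈ K.faces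

/-- The faces of `K` with exactly `n` vertices (i.e. of dimension `n-1`). -/
def faceSet (K : SC V) (n : ℕ) : Set (Finset V) := {F | F ∈ K.faces ∧ F.card = n}

variable (k : Type*) [Field k]

/-- Simplicial `(n-1)`-chains with coefficients in `k`: formal `k`-linear
combinations of faces with `n` vertices.  (`n = 0` corresponds to the empty face,
used for *reduced* homology.) -/
abbrev Chains (K : SC V) (n : ℕ) := (faceSet K n) →₀ k

/-- The boundary of a single face, with the usual signs determined by the
linear order on the vertices. -/
noncomputable def bdFace (K : SC V) (n : ℕ) (F : faceSet K (n + 1)) : Chains k K n :=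
  ∑ v ∈ (F : Finset V).attach,
    ((-1 : k) ^ (((F : Finset V).filter (fun x => x < (v : V))).card)) •
      Finsupp.single (⟨(F : Finset V).erase v,
        K.down_closed F.2.1 (Finset.erase_subset _ _),
        by rw [Finset.card_erase_of_mem v.2, F.2.2]; rfl⟩ : faceSet K n) 1

/-- The simplicial boundary map. -/
noncomputable def bd (K : SC V) (n : ℕ) : Chains k K (n + 1) →ₗ[k] Chains k K n :=
  Finsupp.lsum k fun F => LinearMap.toSpanSingleton k _ (bdFace k K n F)

/-- The reduced cycles in degree `n - 1` (chains supported on faces with `n` vertices). -/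
noncomputable def cycles (K : SC V) : (n : ℕ) → Submodule k (Chains k K n)
  | 0 => ⊤
  | (m + 1) => LinearMap.ker (bd k K m)

/-- The boundaries in degree `n - 1`. -/
noncomputable def boundaries (K : SC V) (n : ℕ) : Submodule k (Chains k K n) :=
  LinearMap.range (bd k K n)

/-- `HNonzero k K n` says that the reduced simplicial homology `H̃_{n-1}(K; k)`
is nonzero: some reduced cycle on faces with `n` vertices is not a boundary. -/
def HNonzero (K : SC V) (n : ℕ) : Prop := ¬ (cycles k K n ≤ boundaries k K n)

/-- The dimension of the reduced homology `H̃_{n-1}(K; k)` as a `k`-vector space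
(for finite complexes): `dim (cycles) - dim (boundaries ∩ cycles)`. -/
noncomputable def homDim (K : SC V) (n : ℕ) : ℕ :=
  Module.finrank k ↥(cycles k K n) -
    Module.finrank k ↥(boundaries k K n ⊓ cycles k K n)

/-- `girth k K p` is the `(p-1)`-girth `gr_{p-1}(K)` over the field `k`: the least
cardinality of a vertex set `W` such that `H̃_{p-1}(lk_K(F)[W]; k) ≠ 0` for some
face `F` of `K` (including the empty face), or `∞` if there is no such `W`. -/
noncomputable def girth (K : SC V) (p : ℕ) : ℕ∞ :=
  sInf ((fun W : Finset V => (W.card : ℕ∞)) ''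
    {W : Finset V | ∃ F ∈ K.faces, HNonzero k ((K.link F).restrict ↑W) p})

/-- A non-returning walk of length `len` in the directed 1-skeleton of `K`:
consecutive vertices span edges, and no three consecutive vertices return
(`v_i ≠ v_{i+2}`) or span a 2-face of `K`. -/
def IsNRWalk (K : SC V) (len : ℕ) (w : ℕ → V) : Prop :=
  (∀ i < len, w i ≠ w (i + 1) ∧ ({w i, w (i + 1)} : Finset V) ∈ K.faces) ∧
  (∀ i, i + 2 ≤ len → w i ≠ w (i + 2) ∧ ({w i, w (i + 1), w (i + 2)} : Finset V) ∉ K.faces)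

end SC
namespace SCAux

open SC Finset

variable {V : Type*} [LinearOrder V] (k : Type*) [Field k] (K : SC V)

lemma bd_single (n : ℕ) (F : SC.faceSet K (n+1)) :
    SC.bd k K n (Finsupp.single F 1) = SC.bdFace k K n F := by
  simp [SC.bd, Finsupp.lsum_single, LinearMap.toSpanSingleton_apply]

lemma single_eq_of_val_eq {n : ℕ} (F G : SC.faceSet K n) (h : (F : Finset V) = (G : Finset V)) :
    (Finsupp.single F (1:k)) = Finsupp.single G 1 := by
  congr 1; exact Subtype.ext h

lemma bdFace_eq_sum (S : Finset V) (hS : S ∈ K.faces) (hc : S.card = 2) :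
    SC.bdFace k K 1 ⟨S, hS, hc⟩ =
      ∑ x ∈ S, ((-1:k) ^ ((S.filter (fun y => y < x)).card)) •
        (if hx : x ∈ S then
          Finsupp.single (⟨S.erase x, K.down_closed hS (Finset.erase_subset _ _),
            by rw [Finset.card_erase_of_mem hx, hc]⟩ : SC.faceSet K 1) 1
        else 0) := by
  rw [SC.bdFace, ← Finset.sum_attach S]
  exact Finset.sum_congr rfl fun v _ => by rw [dif_pos v.2]

end SCAux
set_option linter.unusedSectionVars false

namespace SCAux
open SC Finset
variable {V : Type*} [LinearOrder V] (k : Type*) [Field k] (K : SC V)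

lemma bdFace_pair (a b : V) (hab : a < b) (hF : ({a,b} : Finset V) ∈ K.faces)
    (ha1 : ({a} : Finset V) ∈ K.faces) (hb1 : ({b} : Finset V) ∈ K.faces) :
    SC.bdFace k K 1 ⟨{a,b}, hF, Finset.card_pair hab.ne⟩ =
      Finsupp.single (⟨{b}, hb1, Finset.card_singleton b⟩ : SC.faceSet K 1) 1 -
      Finsupp.single (⟨{a}, ha1, Finset.card_singleton a⟩ : SC.faceSet K 1) 1 := by
  rw [bdFace_eq_sum k K {a,b} hF (Finset.card_pair hab.ne), Finset.sum_pair hab.ne]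
  have h1 : ({a,b} : Finset V).filter (fun y => y < a) = ∅ := by
    rw [Finset.filter_insert, if_neg (lt_irrefl a), Finset.filter_singleton,
      if_neg (not_lt.mpr hab.le)]
  have h2 : ({a,b} : Finset V).filter (fun y => y < b) = {a} := by
    rw [Finset.filter_insert, if_pos hab, Finset.filter_singleton, if_neg (lt_irrefl b)]
    simp
  have e1 : ({a,b} : Finset V).erase a = {b} := by
    exact Finset.erase_insert (by simp [hab.ne])
  have e2 : ({a,b} : Finset V).erase b = {a} := by
    rw [Finset.pair_comm]; exact Finset.erase_insert (by simp [hab.ne'])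
  rw [dif_pos (Finset.mem_insert_self a {b}), dif_pos (by simp : b ∈ ({a,b}:Finset V))]
  rw [h1, h2, sub_eq_add_neg]
  simp only [Finset.card_empty, Finset.card_singleton, pow_zero, pow_one, one_smul, neg_one_smul]
  congr 1
  · exact single_eq_of_val_eq k K _ _ e1
  · exact congrArg Neg.neg (single_eq_of_val_eq k K _ _ e2)

lemma bd_edge (x y : V) (hxy : x ≠ y) (hF : ({x,y} : Finset V) ∈ K.faces)
    (hx1 : ({x} : Finset V) ∈ K.faces) (hy1 : ({y} : Finset V) ∈ K.faces) :
    SC.bd k K 1 ((if x < y then (1:k) else -1) •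
        Finsupp.single (⟨{x,y}, hF, Finset.card_pair hxy⟩ : SC.faceSet K 2) 1) =
      Finsupp.single (⟨{y}, hy1, Finset.card_singleton y⟩ : SC.faceSet K 1) 1 -
      Finsupp.single (⟨{x}, hx1, Finset.card_singleton x⟩ : SC.faceSet K 1) 1 := by
  rcases hxy.lt_or_gt with h | h
  · rw [if_pos h, one_smul, bd_single]
    have : (⟨{x,y}, hF, Finset.card_pair hxy⟩ : SC.faceSet K 2) =
        ⟨{x,y}, hF, Finset.card_pair h.ne⟩ := rfl
    rw [this, bdFace_pair k K x y h hF hx1 hy1]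
  · rw [if_neg (not_lt.mpr h.le), map_smul, bd_single]
    have hF' : ({y,x} : Finset V) ∈ K.faces := by rwa [Finset.pair_comm]
    have : (⟨{x,y}, hF, Finset.card_pair hxy⟩ : SC.faceSet K 2) =
        ⟨{y,x}, hF', Finset.card_pair h.ne⟩ := Subtype.ext (Finset.pair_comm x y)
    rw [this, bdFace_pair k K y x h hF' hy1 hx1]
    simp [neg_sub]
end SCAux
set_option maxHeartbeats 1000000 in
theorem common_neighbors_le {V : Type*} [LinearOrder V] (k : Type*) [Field k]
    (K : SC V) (hflag : K.Flag) (d : ℕ)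
    (hdim : ∀ F ∈ K.faces, F.card ≤ d) (hdim' : ∃ F ∈ K.faces, F.card = d)
    (hg : (4 : ℕ∞) < SC.girth k K 2)
    (u v : V) (hne : u ≠ v) (hu : ({u} : Finset V) ∈ K.faces)
    (hv : ({v} : Finset V) ∈ K.faces) (hnadj : ({u, v} : Finset V) ∉ K.faces)
    (s : ℕ) (g : Fin s → V) (hinj : Function.Injective g)
    (hcn : ∀ i, g i ≠ u ∧ g i ≠ v ∧
      ({u, g i} : Finset V) ∈ K.faces ∧ ({v, g i} : Finset V) ∈ K.faces) :
    s ≤ d := by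
  by_contra hs
  push_neg at hs
  have hemp : (∅ : Finset V) ∈ K.faces := K.down_closed hu (Finset.empty_subset _)
  -- Step 1: some pair of common neighbors is non-adjacent
  have hpair : ∃ i j : Fin s, i ≠ j ∧ ({g i, g j} : Finset V) ∉ K.faces := by
    by_contra hall
    push_neg at hall
    have hTmem : insert u (Finset.image g Finset.univ) ∈ K.faces := by
      apply hflag
      intro G hGT hGc
      rcases Nat.lt_or_ge G.card 2 with hlt | hge
      · rcases Nat.lt_or_ge G.card 1 with h0 | h1
        · have hG0 : G = ∅ := Finset.card_eq_zero.mp (by omega)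
          exact hG0 ▸ hemp
        · have hG1 : G.card = 1 := by omega
          obtain ⟨x, rfl⟩ := Finset.card_eq_one.mp hG1
          have hx : x ∈ insert u (Finset.image g Finset.univ) :=
            hGT (Finset.mem_singleton_self x)
          rcases Finset.mem_insert.mp hx with rfl | hx'
          · exact hu
          · obtain ⟨i, -, rfl⟩ := Finset.mem_image.mp hx'
            exact K.down_closed (hcn i).2.2.1 (by simp)
      · have hG2 : G.card = 2 := le_antisymm hGc hge
        obtain ⟨x, y, hxy, rfl⟩ := Finset.card_eq_two.mp hG2
        have hx : x ∈ insert u (Finset.image g Finset.univ) := hGT (by simp)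
        have hy : y ∈ insert u (Finset.image g Finset.univ) := hGT (by simp)
        rcases Finset.mem_insert.mp hx with rfl | hx' <;>
          rcases Finset.mem_insert.mp hy with h | hy'
        · exact absurd h.symm hxy
        · obtain ⟨i, -, rfl⟩ := Finset.mem_image.mp hy'
          exact (hcn i).2.2.1
        · obtain ⟨i, -, rfl⟩ := Finset.mem_image.mp hx'
          rw [h, Finset.pair_comm]
          exact (hcn i).2.2.1
        · obtain ⟨i, -, rfl⟩ := Finset.mem_image.mp hx'
          obtain ⟨j, -, rfl⟩ := Finset.mem_image.mp hy'
          exact hall i j (fun hij => hxy (congrArg g hij))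
    have hu_img : u ∉ Finset.image g Finset.univ := by
      simp only [Finset.mem_image, Finset.mem_univ, true_and, not_exists]
      exact fun i => (hcn i).1
    have hTcard := hdim _ hTmem
    rw [Finset.card_insert_of_notMem hu_img,
      Finset.card_image_of_injective _ hinj, Finset.card_univ, Fintype.card_fin] at hTcard
    omega
  obtain ⟨i, j, hij, hnab⟩ := hpair
  set a := g i with ha
  set b := g j with hb
  have hau : a ≠ u := (hcn i).1
  have hav : a ≠ v := (hcn i).2.1
  have hbu : b ≠ u := (hcn j).1
  have hbv : b ≠ v := (hcn j).2.1
  have hab : a ≠ b := fun h => hij (hinj h)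
  have hua : ({u,a} : Finset V) ∈ K.faces := (hcn i).2.2.1
  have hva : ({v,a} : Finset V) ∈ K.faces := (hcn i).2.2.2
  have hub : ({u,b} : Finset V) ∈ K.faces := (hcn j).2.2.1
  have hvb : ({v,b} : Finset V) ∈ K.faces := (hcn j).2.2.2
  set W : Finset V := {u, v, a, b} with hW
  set L : SC V := (K.link ∅).restrict ↑W with hL
  have hLface : ∀ G : Finset V, G ∈ L.faces ↔ (G ∈ K.faces ∧ G ⊆ W) := by
    intro G
    simp [hL, SC.restrict, SC.link, Set.mem_setOf_eq]
  have huW : u ∈ W := by simp [hW]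
  have hvW : v ∈ W := by simp [hW]
  have haW : a ∈ W := by simp [hW]
  have hbW : b ∈ W := by simp [hW]
  have hWcard : W.card = 4 := by
    rw [hW, Finset.card_insert_of_notMem (by simp [hne, Ne.symm hau, Ne.symm hbu]),
      Finset.card_insert_of_notMem (by simp [Ne.symm hav, Ne.symm hbv]),
      Finset.card_pair hab]
  -- edges and vertices present in L
  have hLua : ({u,a} : Finset V) ∈ L.faces :=
    (hLface _).mpr ⟨hua, by simp [Finset.insert_subset_iff, huW, haW]⟩
  have hLav : ({a,v} : Finset V) ∈ L.faces :=
    (hLface _).mpr ⟨by rwa [Finset.pair_comm], by simp [Finset.insert_subset_iff, hvW, haW]⟩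
  have hLvb : ({v,b} : Finset V) ∈ L.faces :=
    (hLface _).mpr ⟨hvb, by simp [Finset.insert_subset_iff, hvW, hbW]⟩
  have hLbu : ({b,u} : Finset V) ∈ L.faces :=
    (hLface _).mpr ⟨by rwa [Finset.pair_comm], by simp [Finset.insert_subset_iff, huW, hbW]⟩
  have hLu : ({u} : Finset V) ∈ L.faces := L.down_closed hLua (by simp)
  have hLv : ({v} : Finset V) ∈ L.faces := L.down_closed hLvb (by simp)
  have hLa : ({a} : Finset V) ∈ L.faces := L.down_closed hLua (by simp)
  have hLb : ({b} : Finset V) ∈ L.faces := L.down_closed hLvb (by simp)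
  -- the 4-cycle chain
  set c : SC.Chains k L 2 :=
    (if u < a then (1:k) else -1) •
      Finsupp.single (⟨{u,a}, hLua, Finset.card_pair (Ne.symm hau)⟩ : SC.faceSet L 2) 1 +
    (if a < v then (1:k) else -1) •
      Finsupp.single (⟨{a,v}, hLav, Finset.card_pair hav⟩ : SC.faceSet L 2) 1 +
    (if v < b then (1:k) else -1) •
      Finsupp.single (⟨{v,b}, hLvb, Finset.card_pair (Ne.symm hbv)⟩ : SC.faceSet L 2) 1 +
    (if b < u then (1:k) else -1) •
      Finsupp.single (⟨{b,u}, hLbu, Finset.card_pair hbu⟩ : SC.faceSet L 2) 1 with hc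
  have hccyc : c ∈ SC.cycles k L 2 := by
    show SC.bd k L 1 c = 0
    rw [hc, map_add, map_add, map_add,
      SCAux.bd_edge k L u a (Ne.symm hau) hLua hLu hLa,
      SCAux.bd_edge k L a v hav hLav hLa hLv,
      SCAux.bd_edge k L v b (Ne.symm hbv) hLvb hLv hLb,
      SCAux.bd_edge k L b u hbu hLbu hLb hLu]
    abel
  -- no 3-element faces in L
  have htriple : ∀ G : Finset V, G ∉ SC.faceSet L 3 := by
    rintro G ⟨hGL, hGc⟩
    obtain ⟨hGK, hGW⟩ := (hLface G).mp hGL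
    have h4 : ∀ x y : V, x ∈ W → y ∈ W → x ≠ y → x ∉ G → y ∉ G → False := by
      intro x y hxW hyW hxy hxG hyG
      have hsub : G ⊆ (W.erase x).erase y := by
        rw [Finset.subset_erase]
        exact ⟨by rw [Finset.subset_erase]; exact ⟨hGW, hxG⟩, hyG⟩
      have hle := Finset.card_le_card hsub
      rw [Finset.card_erase_of_mem (Finset.mem_erase.mpr ⟨hxy.symm, hyW⟩),
        Finset.card_erase_of_mem hxW, hWcard, hGc] at hle
      omega
    have hor : (u ∈ G ∧ v ∈ G) ∨ (a ∈ G ∧ b ∈ G) := by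
      by_contra hcon
      push_neg at hcon
      by_cases hu' : u ∈ G
      · have hv' : v ∉ G := hcon.1 hu'
        by_cases ha' : a ∈ G
        · exact h4 v b hvW hbW (Ne.symm hbv) hv' (hcon.2 ha')
        · exact h4 v a hvW haW (Ne.symm hav) hv' ha'
      · by_cases ha' : a ∈ G
        · exact h4 u b huW hbW (Ne.symm hbu) hu' (hcon.2 ha')
        · exact h4 u a huW haW (Ne.symm hau) hu' ha'
    rcases hor with ⟨h1, h2⟩ | ⟨h1, h2⟩
    · exact hnadj (K.down_closed hGK
        (Finset.insert_subset h1 (Finset.singleton_subset_iff.mpr h2)))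
    · exact hnab (K.down_closed hGK
        (Finset.insert_subset h1 (Finset.singleton_subset_iff.mpr h2)))
  -- c is nonzero
  have hcne : c ≠ 0 := by
    intro h0
    have := congrFun (congrArg DFunLike.coe h0)
      (⟨{u,a}, hLua, Finset.card_pair (Ne.symm hau)⟩ : SC.faceSet L 2)
    have pne1 : (⟨{a,v}, hLav, Finset.card_pair hav⟩ : SC.faceSet L 2) ≠
        ⟨{u,a}, hLua, Finset.card_pair (Ne.symm hau)⟩ := by
      simp only [ne_eq, Subtype.mk.injEq]
      intro h; apply hne.symm
      have : v ∈ ({u,a} : Finset V) := by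
        have h' : ({a,v} : Finset V) = {u,a} := congrArg Subtype.val h
        exact h' ▸ (by simp)
      simpa [Ne.symm hav] using this
    have pne2 : (⟨{v,b}, hLvb, Finset.card_pair (Ne.symm hbv)⟩ : SC.faceSet L 2) ≠
        ⟨{u,a}, hLua, Finset.card_pair (Ne.symm hau)⟩ := by
      simp only [ne_eq, Subtype.mk.injEq]
      intro h; apply hne.symm
      have : v ∈ ({u,a} : Finset V) := by
        have h' : ({v,b} : Finset V) = {u,a} := congrArg Subtype.val h
        exact h' ▸ (by simp)
      simpa [Ne.symm hav] using this
    have pne3 : (⟨{b,u}, hLbu, Finset.card_pair hbu⟩ : SC.faceSet L 2) ≠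
        ⟨{u,a}, hLua, Finset.card_pair (Ne.symm hau)⟩ := by
      simp only [ne_eq, Subtype.mk.injEq]
      intro h
      have hbm : b ∈ ({u,a} : Finset V) := by
        have h' : ({b,u} : Finset V) = {u,a} := congrArg Subtype.val h
        exact h' ▸ (by simp)
      simp only [Finset.mem_insert, Finset.mem_singleton] at hbm
      rcases hbm with h' | h'
      · exact hbu h'
      · exact hab h'.symm
    rw [hc] at this
    simp only [Finsupp.coe_add, Pi.add_apply, Finsupp.smul_apply, Finsupp.single_eq_same,
      Finsupp.single_eq_of_ne pne1, Finsupp.single_eq_of_ne pne2, Finsupp.single_eq_of_ne pne3,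
      smul_zero, add_zero, smul_eq_mul, mul_one, Finsupp.coe_zero, Pi.zero_apply] at this
    split_ifs at this <;> simp_all
  -- hence reduced H_1 of L is nonzero
  have hH : SC.HNonzero k L 2 := by
    intro hle
    have hbmem := hle hccyc
    rw [SC.boundaries, LinearMap.mem_range] at hbmem
    obtain ⟨x, hx⟩ := hbmem
    have hx0 : x = 0 := by
      ext F
      exact absurd F.2 (htriple F.1)
    rw [hx0, map_zero] at hx
    exact hcne hx.symm
  -- contradiction with the girth hypothesis
  have hmem : (4 : ℕ∞) ∈ ((fun W : Finset V => (W.card : ℕ∞)) ''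
      {W : Finset V | ∃ F ∈ K.faces, SC.HNonzero k ((K.link F).restrict ↑W) 2}) := by
    refine ⟨W, ⟨∅, hemp, ?_⟩, by show ((W.card : ℕ∞)) = 4; rw [hWcard]; rfl⟩
    exact hH
  have hle4 : SC.girth k K 2 ≤ 4 := sInf_le hmem
  exact absurd hg (not_lt.mpr hle4)
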